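/- Let R be a ring and S a subset of R satisfying: (i) if a,b ∈ R and ab ∈ S then a ∈ S; (ii) S is a right Ore set; (iii) every element of S is regular; (iv) the right Ore localization Q := R[S⁻¹] is directly finite. For a right R-module M, let H := Hom_R(K, M ⊗_R K) with right R-module structure (f·r)(k) = f(rk), where K := Q/R. Then for every s ∈ S, the submodule U(s) := {f ∈ H | fR ⊆ Hs} of H equals V(s) := {f ∈ H | f((Rs⁻¹)/R) = 0}, where (Rs⁻¹)/R denotes the submodule of K consisting of cosets rs⁻¹ + R with r ∈ R. -/
import Mathlib


/-!
STATEMENT 0: Let R be a ring and S a (multiplicatively closed) subset of R satisfying: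
(i) if a,b ∈ R and ab ∈ S then a ∈ S; (ii) S is a right Ore set; (iii) every element of S
is regular; (iv) the right Ore localization Q := R[S⁻¹] is directly finite. For a right
R-module M, let H := Hom_R(K, M ⊗_R K) with right R-module structure (f·r)(k) = f(rk),
where K := Q/R. Then for every s ∈ S, the submodule U(s) := {f ∈ H | fR ⊆ Hs} of H equals
V(s) := {f ∈ H | f((Rs⁻¹)/R) = 0}.

Right `R`-modules are left `Rᵐᵒᵖ`-modules.  The localization `Q = R[S⁻¹]` is a ring with
an injective ring homomorphism `φ : R →+* Q` such that `φ s` is invertible for `s ∈ S` and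
every element of `Q` is a right fraction `φ r * (φ s)⁻¹`; it is a right `R`-module via
`op r • q = q * φ r`, and `K := Q/R` is the quotient right `R`-module, with the left
`R`-action `lmulK` descended from left multiplication in `Q`.  Since Mathlib has no tensor
product over noncommutative rings, the tensor product `M ⊗_R K` is axiomatized as a right
`R`-module `T` with a biadditive balanced map `β : M → K → T` (`R`-linear in `K`),
universal among biadditive balanced maps into abelian groups.  In `H := K →ₗ[Rᵐᵒᵖ] T`,
the product `f·r` is `f ∘ lmulK r`, so that `U(s)` and `V(s)` become the two sets below.
-/

universe u
open MulOpposite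

section Setting

variable (R Q : Type u) [Ring R] [Ring Q] (φ : R →+* Q) [Module Rᵐᵒᵖ Q]
variable (hsmul : ∀ (q : Q) (r : R), op r • q = q * φ r)

/-- The image of `R` in `Q`, as a right `R`-submodule of `Q`. -/
def rsub : Submodule Rᵐᵒᵖ Q where
  carrier := Set.range φ
  zero_mem' := ⟨0, map_zero φ⟩
  add_mem' := by rintro _ _ ⟨a, rfl⟩ ⟨b, rfl⟩; exact ⟨a + b, map_add φ a b⟩
  smul_mem' := by
    rintro c _ ⟨a, rfl⟩
    refine ⟨a * c.unop, ?_⟩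
    rw [map_mul, ← hsmul (φ a) c.unop, op_unop]

/-- `K := Q/R` as a right `R`-module. -/
abbrev kmod := Q ⧸ rsub R Q φ hsmul

/-- Left multiplication by `φ r` on `Q`, as an endomorphism of the right `R`-module `Q`. -/
def lmulQ (r : R) : Q →ₗ[Rᵐᵒᵖ] Q where
  toFun q := φ r * q
  map_add' a b := mul_add _ a b
  map_smul' c q := by
    simp only [RingHom.id_apply]
    rw [← op_unop c, hsmul, hsmul, mul_assoc]

/-- The left action of `r ∈ R` on `K = Q/R`, descended from left multiplication by `φ r`
on `Q`; this is an endomorphism of the right `R`-module `K`. -/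
def lmulK (r : R) : kmod R Q φ hsmul →ₗ[Rᵐᵒᵖ] kmod R Q φ hsmul :=
  Submodule.mapQ _ _ (lmulQ R Q φ hsmul r) (by
    rintro _ ⟨a, rfl⟩
    exact ⟨r * a, by simp [lmulQ, map_mul]⟩)

end Setting

theorem stmt0 (R Q : Type u) [Ring R] [Ring Q] (S : Submonoid R) (φ : R →+* Q)
    [Module Rᵐᵒᵖ Q] (hsmul : ∀ (q : Q) (r : R), op r • q = q * φ r)
    -- (i) `ab ∈ S` implies `a ∈ S`
    (hsat : ∀ a b : R, a * b ∈ S → a ∈ S)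
    -- (ii) `S` is a right Ore set
    (hOre : ∀ (r : R), ∀ s ∈ S, ∃ (r' s' : R), s' ∈ S ∧ r * s' = s * r')
    -- (iii) the elements of `S` are regular
    (hreg : ∀ s ∈ S, IsRegular s)
    -- (iv) `Q` is directly finite
    (hdf : ∀ a b : Q, a * b = 1 → b * a = 1)
    -- `Q` is the right Ore localization `R[S⁻¹]`
    (hinj : Function.Injective φ)
    (hunit : ∀ s ∈ S, IsUnit (φ s))
    (hfrac : ∀ q : Q, ∃ (r : R) (s : R), s ∈ S ∧ q * φ s = φ r)
    -- a right `R`-module `M` and the tensor product `T = M ⊗_R K`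
    (M T : Type u) [AddCommGroup M] [Module Rᵐᵒᵖ M] [AddCommGroup T] [Module Rᵐᵒᵖ T]
    (β : M → kmod R Q φ hsmul → T)
    (hβ1 : ∀ x y k, β (x + y) k = β x k + β y k)
    (hβ2 : ∀ x k k', β x (k + k') = β x k + β x k')
    (hbal : ∀ (x : M) (r : R) (k : kmod R Q φ hsmul),
      β (op r • x) k = β x (lmulK R Q φ hsmul r k))
    (hlin : ∀ (x : M) (r : R) (k : kmod R Q φ hsmul), β x (op r • k) = op r • β x k)
    (huniv : ∀ (A : Type u) [AddCommGroup A] (b : M → kmod R Q φ hsmul → A),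
      (∀ x y k, b (x + y) k = b x k + b y k) →
      (∀ x k k', b x (k + k') = b x k + b x k') →
      (∀ (x : M) (r : R) (k : kmod R Q φ hsmul),
        b (op r • x) k = b x (lmulK R Q φ hsmul r k)) →
      ∃! h : T →+ A, ∀ x k, h (β x k) = b x k)
    (s : R) (hs : s ∈ S) :
    -- U(s) = {f ∈ H | fR ⊆ Hs}
    {f : kmod R Q φ hsmul →ₗ[Rᵐᵒᵖ] T | ∀ r : R, ∃ g : kmod R Q φ hsmul →ₗ[Rᵐᵒᵖ] T,
        f.comp (lmulK R Q φ hsmul r) = g.comp (lmulK R Q φ hsmul s)} =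
    -- V(s) = {f ∈ H | f((Rs⁻¹)/R) = 0}
    {f : kmod R Q φ hsmul →ₗ[Rᵐᵒᵖ] T | ∀ r : R,
        f (Submodule.Quotient.mk (φ r * Ring.inverse (φ s))) = 0} := by
  ext f
  simp only [Set.mem_setOf_eq]
  have hmk : ∀ (r : R) (q : Q),
      lmulK R Q φ hsmul r (Submodule.Quotient.mk q) = Submodule.Quotient.mk (φ r * q) := by
    intro r q
    rw [lmulK, Submodule.mapQ_apply]
    rfl
  have hop : ∀ (a : R) (q : Q),
      (op a • (Submodule.Quotient.mk q : kmod R Q φ hsmul)) = Submodule.Quotient.mk (q * φ a) := by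
    intro a q
    rw [← Submodule.Quotient.mk_smul, hsmul]
  constructor
  · intro hf r
    obtain ⟨g, hg⟩ := hf r
    have h2 := LinearMap.congr_fun hg
      (Submodule.Quotient.mk (Ring.inverse (φ s)) : kmod R Q φ hsmul)
    simp only [LinearMap.comp_apply, hmk] at h2
    rw [h2]
    have h1 : (Submodule.Quotient.mk (φ s * Ring.inverse (φ s)) : kmod R Q φ hsmul) = 0 := by
      rw [Ring.mul_inverse_cancel _ (hunit s hs), Submodule.Quotient.mk_eq_zero]
      exact ⟨1, map_one φ⟩
    rw [h1, map_zero]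
  · intro hf r
    set F : kmod R Q φ hsmul →ₗ[Rᵐᵒᵖ] T := f.comp (lmulK R Q φ hsmul r) with hF
    have hsurj : Function.Surjective (lmulK R Q φ hsmul s) := by
      intro k
      obtain ⟨q, rfl⟩ := Submodule.Quotient.mk_surjective _ k
      refine ⟨Submodule.Quotient.mk (Ring.inverse (φ s) * q), ?_⟩
      rw [hmk, ← mul_assoc, Ring.mul_inverse_cancel _ (hunit s hs), one_mul]
    have hker : LinearMap.ker (lmulK R Q φ hsmul s) ≤ LinearMap.ker F := by
      intro k hk
      obtain ⟨q, rfl⟩ := Submodule.Quotient.mk_surjective _ k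
      rw [LinearMap.mem_ker, hmk, Submodule.Quotient.mk_eq_zero] at hk
      obtain ⟨a, ha⟩ := hk
      have hq : q = Ring.inverse (φ s) * φ a := by
        rw [ha, ← mul_assoc, Ring.inverse_mul_cancel _ (hunit s hs), one_mul]
      rw [LinearMap.mem_ker, hF, LinearMap.comp_apply, hmk, hq, ← mul_assoc,
        ← hop a (φ r * Ring.inverse (φ s)), map_smul, hf r, smul_zero]
    let e := LinearMap.quotKerEquivOfSurjective (lmulK R Q φ hsmul s) hsurj
    refine ⟨(Submodule.liftQ _ F hker).comp (e.symm : _ →ₗ[Rᵐᵒᵖ] _), LinearMap.ext fun k => ?_⟩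
    simp only [LinearMap.comp_apply, LinearEquiv.coe_coe]
    have he : e.symm (lmulK R Q φ hsmul s k) =
        Submodule.Quotient.mk (p := LinearMap.ker (lmulK R Q φ hsmul s)) k := by
      apply e.injective
      rw [e.apply_symm_apply]
      rfl
    rw [he, Submodule.liftQ_apply]
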